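/- Let (Ω, 𝒜, P) be a probability space, let X be a random element of a standard Borel space S, let Y be a real random variable, and let κ : S → Measure(ℝ) be a regular conditional distribution of Y given X, i.e., a Markov kernel such that the joint law of (X,Y) equals ∫ δ_x ⊗ κ(x) d(law of X)(x). Assume that for (law of X)-almost every x the probability measure κ(x) is atomless. Define U := F(X, Y), where F(x, y) := κ(x)((−∞, y]). Then the conditional distribution of U given X = x is the uniform distribution on [0,1] for (law of X)-almost every x; in particular, U is uniformly distributed on [0,1] and U is independent of X. -/

import Mathlib

open MeasureTheory ProbabilityTheory


lemma pit_key (μ : Measure ℝ) [IsProbabilityMeasure μ] (h : ∀ y : ℝ, μ {y} = 0)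
    (t : ℝ) (ht0 : 0 ≤ t) (ht1 : t < 1) :
    μ {y | μ (Set.Iic y) ≤ ENNReal.ofReal t} = ENNReal.ofReal t := by
  set A := {y : ℝ | μ (Set.Iic y) ≤ ENNReal.ofReal t} with hA
  have hlow : ∀ b c : ℝ, c ≤ b → b ∈ A → c ∈ A := fun b c hcb hb =>
    le_trans (measure_mono (Set.Iic_subset_Iic.2 hcb)) hb
  have ht1' : ENNReal.ofReal t < 1 := by
    rw [← ENNReal.ofReal_one]
    exact (ENNReal.ofReal_lt_ofReal_iff one_pos).2 ht1
  -- bounded above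
  obtain ⟨y₀, hy₀⟩ : ∃ y₀ : ℝ, ENNReal.ofReal t < μ (Set.Iic y₀) := by
    have h1 := tendsto_measure_Iic_atTop μ
    rw [measure_univ] at h1
    exact (h1.eventually (eventually_gt_nhds ht1')).exists
  have hbdd : BddAbove A := ⟨y₀, fun z hz => by
    by_contra hzy
    exact absurd (le_trans (measure_mono (Set.Iic_subset_Iic.2 (le_of_not_ge hzy))) hz) hy₀.not_ge⟩
  rcases Set.eq_empty_or_nonempty A with hAe | hAne
  · -- A empty : t must be 0
    have hall : ∀ y : ℝ, ENNReal.ofReal t < μ (Set.Iic y) := by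
      intro y
      by_contra hy
      exact (Set.eq_empty_iff_forall_notMem.1 hAe y) (le_of_not_gt hy)
    have hempty : (⋂ n : ℕ, Set.Iic (-(n : ℝ))) = ∅ := by
      ext x
      simp only [Set.mem_iInter, Set.mem_Iic, Set.mem_empty_iff_false, iff_false, not_forall]
      obtain ⟨n, hn⟩ := exists_nat_gt (-x)
      exact ⟨n, by push_neg; linarith⟩
    have hanti : Antitone (fun n : ℕ => Set.Iic (-(n : ℝ))) := fun m n hmn =>
      Set.Iic_subset_Iic.2 (by exact_mod_cast neg_le_neg (by exact_mod_cast hmn))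
    have := hanti.measure_iInter (μ := μ) (fun n => measurableSet_Iic.nullMeasurableSet)
      ⟨0, measure_ne_top μ _⟩
    rw [hempty, measure_empty] at this
    have h0 : ENNReal.ofReal t ≤ 0 := by
      rw [this]
      exact le_iInf fun n => (hall _).le
    rw [hAe, measure_empty]
    exact (le_antisymm h0 zero_le).symm
  · set a := sSup A with ha
    have hmemIio : Set.Iio a ⊆ A := fun y hy => by
      obtain ⟨z, hzA, hyz⟩ := exists_lt_of_lt_csSup hAne hy
      exact hlow z y hyz.le hzA
    -- μ (Iio a) ≤ ofReal t
    have hIioU : Set.Iio a = ⋃ n : ℕ, Set.Iic (a - 1 / (n + 1)) := by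
      ext x
      simp only [Set.mem_Iio, Set.mem_iUnion, Set.mem_Iic]
      constructor
      · intro hx
        obtain ⟨n, hn⟩ := exists_nat_one_div_lt (sub_pos.2 hx)
        exact ⟨n, by push_cast at hn ⊢; linarith⟩
      · rintro ⟨n, hn⟩
        have : (0:ℝ) < 1 / (n + 1) := by positivity
        linarith
    have hIio_le : μ (Set.Iio a) ≤ ENNReal.ofReal t := by
      rw [hIioU, Monotone.measure_iUnion (fun m n hmn => Set.Iic_subset_Iic.2 (by
        have : (1:ℝ) / (n + 1) ≤ 1 / (m + 1) := by
          apply one_div_le_one_div_of_le (by positivity) (by exact_mod_cast Nat.add_le_add_right hmn 1)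
        linarith))]
      refine iSup_le fun n => ?_
      have : a - 1 / (n + 1) ∈ A := hmemIio (by
        have : (0:ℝ) < 1 / (n + 1) := by positivity
        simp only [Set.mem_Iio]; linarith)
      exact this
    -- ofReal t ≤ μ (Iic a)
    have hIicI : Set.Iic a = ⋂ n : ℕ, Set.Iic (a + 1 / (n + 1)) := by
      ext x
      simp only [Set.mem_Iic, Set.mem_iInter]
      constructor
      · intro hx n
        have : (0:ℝ) < 1 / (n + 1) := by positivity
        linarith
      · intro hx
        by_contra hax
        push_neg at hax
        obtain ⟨n, hn⟩ := exists_nat_one_div_lt (sub_pos.2 hax)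
        have := hx n
        push_cast at hn this
        linarith
    have hIic_ge : ENNReal.ofReal t ≤ μ (Set.Iic a) := by
      rw [hIicI, Antitone.measure_iInter (fun m n hmn => Set.Iic_subset_Iic.2 (by
          have : (1:ℝ) / (n + 1) ≤ 1 / (m + 1) := by
            apply one_div_le_one_div_of_le (by positivity) (by exact_mod_cast Nat.add_le_add_right hmn 1)
          linarith))
        (fun n => measurableSet_Iic.nullMeasurableSet) ⟨0, measure_ne_top μ _⟩]
      refine le_iInf fun n => ?_
      have hnotmem : a + 1 / (n + 1) ∉ A := fun hmem => by
        have hle := le_csSup hbdd hmem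
        have : (0:ℝ) < 1 / (n + 1) := by positivity
        linarith
      exact le_of_not_ge hnotmem
    -- Iic a has measure = Iio a
    have hIicIio : μ (Set.Iic a) = μ (Set.Iio a) := by
      refine le_antisymm ?_ (measure_mono Set.Iio_subset_Iic_self)
      calc μ (Set.Iic a) = μ (Set.Iio a ∪ {a}) := by rw [Set.Iio_union_right]
        _ ≤ μ (Set.Iio a) + μ {a} := measure_union_le _ _
        _ = μ (Set.Iio a) := by rw [h a, add_zero]
    have hval : μ (Set.Iic a) = ENNReal.ofReal t :=
      le_antisymm (hIicIio ▸ hIio_le) hIic_ge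
    have hsub : A ⊆ Set.Iic a := fun z hz => le_csSup hbdd hz
    refine le_antisymm (le_trans (measure_mono hsub) hval.le) ?_
    calc ENNReal.ofReal t = μ (Set.Iio a) := by rw [← hIicIio, hval]
      _ ≤ μ A := measure_mono hmemIio

lemma pit_map_eq (μ : Measure ℝ) [IsProbabilityMeasure μ] (h : ∀ y : ℝ, μ {y} = 0) :
    Measure.map (fun y => (μ (Set.Iic y)).toReal) μ = volume.restrict (Set.Icc (0 : ℝ) 1) := by
  have hmono : Monotone (fun y : ℝ => (μ (Set.Iic y)).toReal) := fun a b hab =>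
    ENNReal.toReal_mono (measure_ne_top μ _) (measure_mono (Set.Iic_subset_Iic.2 hab))
  have hFm : Measurable (fun y : ℝ => (μ (Set.Iic y)).toReal) := hmono.measurable
  haveI : IsProbabilityMeasure (Measure.map (fun y : ℝ => (μ (Set.Iic y)).toReal) μ) :=
    Measure.isProbabilityMeasure_map hFm.aemeasurable
  refine MeasureTheory.Measure.ext_of_Iic _ _ (fun t => ?_)
  rw [Measure.map_apply hFm measurableSet_Iic, Measure.restrict_apply measurableSet_Iic]
  rcases lt_or_ge t 0 with ht0 | ht0
  · have h1 : (fun y : ℝ => (μ (Set.Iic y)).toReal) ⁻¹' Set.Iic t = ∅ := by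
      ext y
      simp only [Set.mem_preimage, Set.mem_Iic, Set.mem_empty_iff_false, iff_false, not_le]
      exact lt_of_lt_of_le ht0 ENNReal.toReal_nonneg
    have h2 : Set.Iic t ∩ Set.Icc (0:ℝ) 1 = ∅ := by
      ext x
      simp only [Set.mem_inter_iff, Set.mem_Iic, Set.mem_Icc, Set.mem_empty_iff_false, iff_false]
      rintro ⟨hx, hx0, -⟩; linarith
    rw [h1, h2, measure_empty, measure_empty]
  · have hpre : (fun y : ℝ => (μ (Set.Iic y)).toReal) ⁻¹' Set.Iic t
        = {y : ℝ | μ (Set.Iic y) ≤ ENNReal.ofReal t} := by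
      ext y
      simp only [Set.mem_preimage, Set.mem_Iic, Set.mem_setOf_eq]
      exact (ENNReal.le_ofReal_iff_toReal_le (measure_ne_top μ _) ht0).symm
    rw [hpre]
    rcases lt_or_ge t 1 with ht1 | ht1
    · rw [pit_key μ h t ht0 ht1]
      have h2 : Set.Iic t ∩ Set.Icc (0:ℝ) 1 = Set.Icc 0 t := by
        ext x
        simp only [Set.mem_inter_iff, Set.mem_Iic, Set.mem_Icc]
        constructor
        · rintro ⟨hx, hx0, -⟩; exact ⟨hx0, hx⟩
        · rintro ⟨hx0, hx⟩; exact ⟨hx, hx0, by linarith⟩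
      rw [h2, Real.volume_Icc, sub_zero]
    · have h1 : {y : ℝ | μ (Set.Iic y) ≤ ENNReal.ofReal t} = Set.univ := by
        ext y
        simp only [Set.mem_setOf_eq, Set.mem_univ, iff_true]
        calc μ (Set.Iic y) ≤ 1 := prob_le_one
          _ = ENNReal.ofReal 1 := ENNReal.ofReal_one.symm
          _ ≤ ENNReal.ofReal t := ENNReal.ofReal_le_ofReal ht1
      have h2 : Set.Iic t ∩ Set.Icc (0:ℝ) 1 = Set.Icc 0 1 := by
        refine Set.inter_eq_self_of_subset_right (fun x hx => ?_)
        exact le_trans hx.2 ht1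
      rw [h1, h2, measure_univ, Real.volume_Icc]
      norm_num


/-- conditional probability integral transform. Let `X` be a random element
of a standard Borel space `S`, `Y` a real random variable, and `κ` a Markov kernel which is
a regular conditional distribution of `Y` given `X`, i.e. the joint law of `(X,Y)` is
`(law X) ⊗ₘ κ`. If `κ x` is atomless for `(law X)`-a.e. `x`, then with
`U = F(X,Y)` where `F(x,y) = κ x (−∞, y]`, the conditional distribution of `U` given `X`
is the uniform distribution on `[0,1]` (i.e. the joint law of `(X,U)` is the product of
`law X` with `Unif[0,1]`); in particular `U ∼ Unif[0,1]` and `U` is independent of `X`. -/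
theorem conditional_rank_uniform_indep {Ω : Type*} [MeasurableSpace Ω]
    {P : Measure Ω} [IsProbabilityMeasure P]
    {S : Type*} [MeasurableSpace S] [StandardBorelSpace S]
    (X : Ω → S) (hX : Measurable X) (Y : Ω → ℝ) (hY : Measurable Y)
    (κ : Kernel S ℝ) [IsMarkovKernel κ]
    (hdisint : Measure.map (fun ω => (X ω, Y ω)) P = (Measure.map X P) ⊗ₘ κ)
    (hatomless : ∀ᵐ x ∂(Measure.map X P), ∀ y : ℝ, κ x {y} = 0)
    (U : Ω → ℝ) (hU : ∀ ω, U ω = (κ (X ω) (Set.Iic (Y ω))).toReal) :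
    Measure.map (fun ω => (X ω, U ω)) P =
        (Measure.map X P) ⊗ₘ (Kernel.const S (volume.restrict (Set.Icc (0 : ℝ) 1))) ∧
      Measure.map U P = volume.restrict (Set.Icc (0 : ℝ) 1) ∧
      IndepFun U X P := by
  set μ := Measure.map X P with hμ
  haveI : IsProbabilityMeasure μ := Measure.isProbabilityMeasure_map hX.aemeasurable
  set c := volume.restrict (Set.Icc (0 : ℝ) 1) with hc
  haveI : IsFiniteMeasure c := ⟨by
    rw [hc, Measure.restrict_apply_univ, Real.volume_Icc]; simp⟩
  -- measurability of the kernel cdf in both variables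
  have hgm : Measurable (fun p : S × ℝ => κ p.1 (Set.Iic p.2)) := by
    have ht : MeasurableSet {q : (S × ℝ) × ℝ | q.2 ≤ q.1.2} :=
      measurableSet_le measurable_snd measurable_fst.snd
    have h1 := Kernel.measurable_kernel_prodMk_left (κ := Kernel.prodMkRight ℝ κ) ht
    have h2 : (fun a : S × ℝ => (Kernel.prodMkRight ℝ κ) a
        (Prod.mk a ⁻¹' {q : (S × ℝ) × ℝ | q.2 ≤ q.1.2}))
        = fun p : S × ℝ => κ p.1 (Set.Iic p.2) := by
      funext p
      simp only [Kernel.prodMkRight_apply]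
      rfl
    rwa [h2] at h1
  have hgm' : Measurable (fun p : S × ℝ => (κ p.1 (Set.Iic p.2)).toReal) := hgm.ennreal_toReal
  have hUdef : U = (fun p : S × ℝ => (κ p.1 (Set.Iic p.2)).toReal) ∘ (fun ω => (X ω, Y ω)) :=
    funext fun ω => hU ω
  have hUm : Measurable U := hUdef ▸ hgm'.comp (hX.prodMk hY)
  have hfm : Measurable (fun p : S × ℝ => (p.1, (κ p.1 (Set.Iic p.2)).toReal)) :=
    measurable_fst.prodMk hgm'
  have hmapXU : Measure.map (fun ω => (X ω, U ω)) P = μ.prod c := by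
    have hcomp : (fun ω => (X ω, U ω))
        = (fun p : S × ℝ => (p.1, (κ p.1 (Set.Iic p.2)).toReal)) ∘ (fun ω => (X ω, Y ω)) := by
      funext ω; simp [hU ω]
    rw [hcomp, ← Measure.map_map hfm (hX.prodMk hY), hdisint]
    refine (Measure.prod_eq fun s tt hs htt => ?_).symm
    rw [Measure.map_apply hfm (hs.prod htt),
      Measure.compProd_apply (hfm (hs.prod htt))]
    have hxeq : ∀ x : S, κ x (Prod.mk x ⁻¹'
        ((fun p : S × ℝ => (p.1, (κ p.1 (Set.Iic p.2)).toReal)) ⁻¹' (s ×ˢ tt)))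
        = s.indicator (fun x => κ x ((fun y => (κ x (Set.Iic y)).toReal) ⁻¹' tt)) x := by
      intro x
      by_cases hx : x ∈ s
      · rw [Set.indicator_of_mem hx]
        congr 1
        ext y
        simp [hx]
      · rw [Set.indicator_of_notMem hx]
        have : Prod.mk x ⁻¹'
            ((fun p : S × ℝ => (p.1, (κ p.1 (Set.Iic p.2)).toReal)) ⁻¹' (s ×ˢ tt)) = ∅ := by
          ext y; simp [hx]
        rw [this, measure_empty]
    simp_rw [hxeq]
    rw [lintegral_indicator hs]
    have hae : ∀ᵐ x ∂(μ.restrict s),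
        κ x ((fun y => (κ x (Set.Iic y)).toReal) ⁻¹' tt) = c tt := by
      filter_upwards [ae_restrict_of_ae hatomless] with x hx
      have hmx : Measurable (fun y : ℝ => (κ x (Set.Iic y)).toReal) :=
        Monotone.measurable (fun a b hab =>
          ENNReal.toReal_mono (measure_ne_top _ _)
            (measure_mono (Set.Iic_subset_Iic.2 hab)))
      rw [← Measure.map_apply hmx htt, pit_map_eq (κ x) hx, hc]
    rw [lintegral_congr_ae hae, setLIntegral_const, mul_comm]
  refine ⟨?_, ?_, ?_⟩
  · rw [Measure.compProd_const, hmapXU]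
  · have hmapU : Measure.map U P = Measure.map Prod.snd (Measure.map (fun ω => (X ω, U ω)) P) := by
      rw [Measure.map_map measurable_snd (hX.prodMk hUm)]
      rfl
    rw [hmapU, hmapXU, Measure.map_snd_prod, measure_univ, one_smul]
  · rw [indepFun_iff_map_prod_eq_prod_map_map hUm.aemeasurable hX.aemeasurable]
    have hswap : (fun ω => (U ω, X ω)) = Prod.swap ∘ (fun ω => (X ω, U ω)) := rfl
    have hmapU : Measure.map U P = c := by
      have h1 : Measure.map U P
          = Measure.map Prod.snd (Measure.map (fun ω => (X ω, U ω)) P) := by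
        rw [Measure.map_map measurable_snd (hX.prodMk hUm)]
        rfl
      rw [h1, hmapXU, Measure.map_snd_prod, measure_univ, one_smul]
    rw [hswap, ← Measure.map_map measurable_swap (hX.prodMk hUm), hmapXU,
      Measure.prod_swap, hmapU, ← hμ]
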